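/- There exists a T₁ space satisfying the chain (F) condition that is not a D-space. -/

import Mathlib

open Set Topology

/-- The core (F) condition for a family `W` assigning to each point a collection of subsets. -/
def FFamilyCondition {X : Type*} [TopologicalSpace X] (W : X → Set (Set X)) : Prop :=
  (∀ x, ∀ w ∈ W x, x ∈ w) ∧
  ∀ x U, IsOpen U → x ∈ U → ∃ V, IsOpen V ∧ x ∈ V ∧
    ∀ y ∈ V, ∃ w ∈ W y, x ∈ w ∧ w ⊆ U

/-- `X` satisfies well-ordered (F): each `W x` is well-ordered by reverse inclusion. -/
def SatisfiesWellOrderedF (X : Type*) [TopologicalSpace X] : Prop :=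
  ∃ W : X → Set (Set X),
    (∀ x, IsWellOrder (W x) (fun A B => (B : Set X) ⊂ (A : Set X))) ∧
    FFamilyCondition W

/-- `X` satisfies chain (F): each `W x` is linearly ordered by (reverse) inclusion. -/
def SatisfiesChainF (X : Type*) [TopologicalSpace X] : Prop :=
  ∃ W : X → Set (Set X),
    (∀ x, IsChain (· ⊆ ·) (W x)) ∧
    FFamilyCondition W

/-- `X` satisfies decreasing (G). -/
def SatisfiesDecreasingG (X : Type*) [TopologicalSpace X] : Prop :=
  ∃ W : X → ℕ → Set X,
    (∀ x k, x ∈ W x k) ∧ (∀ x k, W x (k + 1) ⊆ W x k) ∧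
    ∀ x U, IsOpen U → x ∈ U → ∃ V, IsOpen V ∧ x ∈ V ∧
      ∀ y ∈ V, ∃ m, x ∈ W y m ∧ W y m ⊆ U

universe u_hn

/-- The `H`/`n` characterization with ordinal-valued `n`. -/
def HNAssignment (X : Type u_hn) [TopologicalSpace X] : Prop :=
  ∃ (H : X → Set X → Set X) (n : X → X → Set X → Ordinal.{u_hn}),
    (∀ x U, IsOpen U → x ∈ U → IsOpen (H x U) ∧ x ∈ H x U) ∧
    (∀ a x y U V, IsOpen U → x ∈ U → IsOpen V → y ∈ V →
      a ∈ H x U → a ∈ H y V → n a x U ≤ n a y V → y ∈ U)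

/-- `X` is a D-space: every neighborhood assignment has a closed discrete kernel. -/
def IsDSpace (X : Type*) [TopologicalSpace X] : Prop :=
  ∀ φ : X → Set X, (∀ x, IsOpen (φ x)) → (∀ x, x ∈ φ x) →
    ∃ D : Set X, IsClosed D ∧ DiscreteTopology D ∧ ⋃ d ∈ D, φ d = Set.univ

section Aux

/-- The space `[0, ω₁)` of countable ordinals. -/
abbrev Omega1Space : Type 1 := {o : Ordinal.{0} // o < (Cardinal.aleph 1).ord}

noncomputable instance : LinearOrder Omega1Space := inferInstance
noncomputable instance : TopologicalSpace Omega1Space := Preorder.topology Omega1Space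
instance : OrderTopology Omega1Space := ⟨rfl⟩

lemma omega1_isLimit : Order.IsSuccLimit ((Cardinal.aleph 1).ord) :=
  Cardinal.isSuccLimit_ord (Cardinal.aleph0_le_aleph 1)

noncomputable def osucc (x : Omega1Space) : Omega1Space :=
  ⟨Order.succ x.val, omega1_isLimit.succ_lt x.2⟩

lemma Iic_eq_Iio (x : Omega1Space) : Iic x = Iio (osucc x) := by
  ext y
  rw [mem_Iic, mem_Iio, ← Subtype.coe_lt_coe, ← Subtype.coe_le_coe]
  exact (Order.lt_succ_iff).symm

lemma isOpen_Iic' (x : Omega1Space) : IsOpen (Iic x) := by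
  rw [Iic_eq_Iio]; exact isOpen_Iio

lemma omega1_chainF : SatisfiesChainF Omega1Space := by
  refine ⟨fun y => {s | ∃ b, y ≤ b ∧ s = Icc y b}, ?_, ?_, ?_⟩
  · rintro y s ⟨b, hb, rfl⟩ t ⟨c, hc, rfl⟩ _
    rcases le_total b c with h | h
    · exact Or.inl (Icc_subset_Icc_right h)
    · exact Or.inr (Icc_subset_Icc_right h)
  · rintro x w ⟨b, hb, rfl⟩
    exact ⟨le_refl x, hb⟩
  · intro x U hU hxU
    by_cases hbot : ∃ l, l < x
    · obtain ⟨l, hl, hsub⟩ := exists_Ioc_subset_of_mem_nhds (hU.mem_nhds hxU) hbot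
      refine ⟨Ioc l x, isOpen_Ioi.inter (isOpen_Iic' x), ⟨hl, le_refl x⟩, ?_⟩
      rintro y ⟨hly, hyx⟩
      exact ⟨Icc y x, ⟨x, hyx, rfl⟩, ⟨hyx, le_refl x⟩,
        fun z hz => hsub ⟨lt_of_lt_of_le hly hz.1, hz.2⟩⟩
    · push_neg at hbot
      refine ⟨Iic x, isOpen_Iic' x, le_refl x, ?_⟩
      intro y hy
      have hxy : y = x := le_antisymm hy (hbot y)
      subst hxy
      exact ⟨Icc y y, ⟨y, le_refl y, rfl⟩, ⟨le_refl y, le_refl y⟩,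
        fun z hz => by rwa [le_antisymm hz.2 hz.1]⟩

lemma omega1_not_DSpace : ¬ IsDSpace Omega1Space := by
  intro h
  obtain ⟨D, hDclosed, hDdisc, hDcover⟩ := h (fun x => Iic x) isOpen_Iic' (fun x => le_refl x)
  -- Every point is below some element of D
  have hcof : ∀ x : Omega1Space, ∃ d ∈ D, x ≤ d := by
    intro x
    have : x ∈ ⋃ d ∈ D, Iic d := hDcover ▸ mem_univ x
    simpa using this
  -- choose a strictly increasing sequence in D
  choose F hFD hFle using hcof
  set x₀ : Omega1Space := ⟨0, omega1_isLimit.pos⟩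
  let d : ℕ → Omega1Space := fun n => Nat.rec (F x₀) (fun _ p => F (osucc p)) n
  have hdD : ∀ n, d n ∈ D := by
    intro n; cases n with
    | zero => exact hFD x₀
    | succ n => exact hFD (osucc (d n))
  have hdlt : ∀ n, d n < d (n + 1) := by
    intro n
    have h1 : osucc (d n) ≤ d (n + 1) := hFle (osucc (d n))
    have h2 : d n < osucc (d n) := by
      rw [← Subtype.coe_lt_coe]; exact Order.lt_succ (d n).val
    exact lt_of_lt_of_le h2 h1
  -- the supremum
  set s : Ordinal.{0} := ⨆ n, (d n).val with hs
  have hslt : s < (Cardinal.aleph 1).ord := by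
    apply Ordinal.iSup_lt_ord
    · rw [Cardinal.isRegular_aleph_one.cof_eq]
      simpa using Cardinal.aleph0_lt_aleph_one
    · exact fun n => (d n).2
  set x : Omega1Space := ⟨s, hslt⟩
  have hdle : ∀ n, d n ≤ x := fun n =>
    Subtype.coe_le_coe.mp (le_ciSup (Ordinal.bddAbove_range _) n)
  have hdltx : ∀ n, d n < x := fun n => lt_of_lt_of_le (hdlt n) (hdle (n + 1))
  -- every open neighborhood of x contains some d n
  have hkey : ∀ U : Set Omega1Space, IsOpen U → x ∈ U → ∃ n, d n ∈ U := by
    intro U hU hxU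
    obtain ⟨l, hl, hsub⟩ := exists_Ioc_subset_of_mem_nhds (hU.mem_nhds hxU) ⟨d 0, hdltx 0⟩
    have : l.val < s := Subtype.coe_lt_coe.mpr hl
    rw [hs, Ordinal.lt_iSup_iff] at this
    obtain ⟨n, hn⟩ := this
    exact ⟨n, hsub ⟨Subtype.coe_lt_coe.mp hn, hdle n⟩⟩
  -- x ∈ D
  have hxD : x ∈ D := by
    rw [← hDclosed.closure_eq]
    rw [mem_closure_iff]
    intro U hU hxU
    obtain ⟨n, hn⟩ := hkey U hU hxU
    exact ⟨d n, hn, hdD n⟩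
  -- discreteness gives an open U with U ∩ D = {x}
  have hsingle : IsOpen {p : D | p = (⟨x, hxD⟩ : D)} := isOpen_discrete _
  rw [isOpen_induced_iff] at hsingle
  obtain ⟨U, hU, hUeq⟩ := hsingle
  have hxU : x ∈ U := by
    have : (⟨x, hxD⟩ : D) ∈ Subtype.val ⁻¹' U := by rw [hUeq]; rfl
    exact this
  obtain ⟨n, hn⟩ := hkey U hU hxU
  have : (⟨d n, hdD n⟩ : D) ∈ Subtype.val ⁻¹' U := hn
  rw [hUeq] at this
  have : d n = x := congrArg Subtype.val this
  exact absurd this (ne_of_lt (hdltx n))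

end Aux

theorem stmt14 :
    ∃ (X : Type 1) (_ : TopologicalSpace X), T1Space X ∧
      SatisfiesChainF X ∧ ¬ IsDSpace X := by
  exact ⟨Omega1Space, inferInstance, inferInstance, omega1_chainF, omega1_not_DSpace⟩
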